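/- Let T be a finite plane tree with n ≥ 2 vertices, let v_0, …, v_{2n−2} be the lexicographic enumeration of rot T, let ũ_1, …, ũ_{n−1} be the lexicographic enumeration of (rot T)°, and write H° for the height process of (rot T)° (so H°(k) = |ũ_{k+1}| for 0 ≤ k ≤ n−2 and H°(n−1) = 0) and H for the height process H_{rot T} of rot T. Set j(k) = 2k − H_T(k+1) + 1 for 0 ≤ k ≤ n−1. Then: j is strictly increasing with j(0) = 0 and j(n−1) = 2n−1; ũ_{1+k} = v_{j(k)} for all 0 ≤ k ≤ n−2; and for all 0 ≤ k ≤ n−2, on the integer interval [j(k), j(k+1)] the process H satisfies: (i) if j(k+1) = j(k)+1 then H(j(k)) = H°(k) and H(j(k)+1) = H°(k+1); (ii) if j(k+1) = j(k)+2 then H(j(k)) = H°(k) and H(j(k)+1) = H(j(k)+2) = H°(k+1); (iii) if j(k+1) > j(k)+2 then H(j(k)) = H°(k), H(j(k)+1) = H(j(k)+2) = H°(k)+1, and H is strictly decreasing on the integer interval [j(k)+2, j(k+1)] with H(j(k+1)) = H°(k+1). -/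

import Mathlib

inductive PTree : Type
  | node : List PTree → PTree

namespace PTree

instance : Inhabited PTree := ⟨node []⟩

mutual
def size : PTree → ℕ
  | node ts => 1 + sizeList ts
def sizeList : List PTree → ℕ
  | [] => 0
  | t :: ts => size t + sizeList ts
end

def deg : PTree → ℕ
  | node ts => ts.length

mutual
def degreesAux : PTree → List ℕ
  | node ts => ts.length :: degreesListAux ts
def degreesListAux : List PTree → List ℕ
  | [] => []
  | t :: ts => degreesAux t ++ degreesListAux ts
end

mutual
def heightsAux : PTree → ℕ → List ℕ
  | node ts, d => d :: heightsListAux ts (d + 1)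
def heightsListAux : List PTree → ℕ → List ℕ
  | [], _ => []
  | t :: ts, d => heightsAux t d ++ heightsListAux ts d
end

mutual
def contourAux : PTree → ℕ → List ℕ
  | node ts, d => d :: contourListAux ts (d + 1)
def contourListAux : List PTree → ℕ → List ℕ
  | [], _ => []
  | t :: ts, d => contourAux t d ++ (d - 1) :: contourListAux ts d
end

mutual
def verticesAux : PTree → List ℕ → List (List ℕ)
  | node ts, p => p :: verticesListAux ts p 0
def verticesListAux : List PTree → List ℕ → ℕ → List (List ℕ)
  | [], _, _ => []
  | t :: ts, p, i => verticesAux t (p ++ [i]) ++ verticesListAux ts p (i + 1)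
end

def vertices (T : PTree) : List (List ℕ) := verticesAux T []

/-- Height process of a plane tree. -/
def H (T : PTree) (k : ℕ) : ℕ := (heightsAux T 0).getD k 0

/-- Contour process of a plane tree. -/
def C (T : PTree) (k : ℕ) : ℕ := (contourAux T 0).getD k 0

/-- Łukasiewicz walk of a plane tree. -/
def S (T : PTree) (k : ℕ) : ℤ :=
  (((degreesAux T).take k).map (fun d => (d : ℤ) - 1)).sum

def subtreeAt : List ℕ → PTree → Option PTree
  | [], t => some t
  | i :: p, node ts => (ts[i]?).bind (subtreeAt p)

def isInternal (T : PTree) (p : List ℕ) : Bool :=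
  match subtreeAt p T with
  | some (node (_ :: _)) => true
  | _ => false

def isVertex (T : PTree) (p : List ℕ) : Bool := (subtreeAt p T).isSome

def rot : PTree → PTree
  | node [] => node []
  | node (t :: ts) => node [rot t, rot (node ts)]

mutual
def corot : PTree → PTree
  | node ts => corotAux ts (node [])
def corotAux : List PTree → PTree → PTree
  | [], acc => acc
  | t :: ts, acc => corotAux ts (node [acc, corot t])
end

mutual
def mirror : PTree → PTree
  | node ts => node (mirrorList ts)
def mirrorList : List PTree → List PTree
  | [] => []
  | t :: ts => mirrorList ts ++ [mirror t]
end

mutual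
def internalTree : PTree → PTree
  | node ts => node (internalList ts)
def internalList : List PTree → List PTree
  | [] => []
  | node [] :: ts => internalList ts
  | t :: ts => internalTree t :: internalList ts
end

def mirrorPath : PTree → List ℕ → List ℕ
  | _, [] => []
  | node ts, i :: p =>
      (ts.length - 1 - i) ::
        (match ts[i]? with
         | some t => mirrorPath t p
         | none => p)

def lexLt : List ℕ → List ℕ → Bool
  | _, [] => false
  | [], _ :: _ => true
  | a :: as, b :: bs => if a < b then true else if a = b then lexLt as bs else false

def nonRootVertices (T : PTree) : List (List ℕ) := (vertices T).tail

def internalVertices (T : PTree) : List (List ℕ) :=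
  (vertices T).filter (fun p => isInternal T p)

/-- the order-preserving identification between non-root vertices of `T` and
internal vertices of `rot T`. -/
def iota (T : PTree) (u : List ℕ) : List ℕ :=
  (internalVertices (rot T)).getD ((nonRootVertices T).idxOf u) []

/-- `L(u)`: number of edges grafted on the left of the ancestral line of `u`. -/
def Lnum (T : PTree) (u : List ℕ) : ℕ :=
  ((vertices T).filter (fun w =>
      !w.isEmpty && (w.dropLast.isPrefixOf u && w.dropLast != u)
        && !(w.isPrefixOf u && w != u) && lexLt w u)).length

/-- mirrored enumeration of `T`. -/
def mirroredEnum (T : PTree) (k : ℕ) : List ℕ :=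
  mirrorPath (mirror T) ((vertices (mirror T)).getD k [])

def descendR (T : PTree) : ℕ → List ℕ → List ℕ
  | 0, p => p
  | fuel + 1, p => if isInternal T (p ++ [1]) then descendR T fuel (p ++ [1]) else p

def ascend (visited : List (List ℕ)) : ℕ → List ℕ → List ℕ
  | 0, p => p.dropLast
  | fuel + 1, p => if p.dropLast ∈ visited then ascend visited fuel p.dropLast else p.dropLast

def rightmostSeq (T : PTree) : ℕ → List (List ℕ)
  | 0 => []
  | k + 1 =>
      let prev := rightmostSeq T k
      let next :=
        match prev.getLast? with
        | none => descendR T (size T) []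
        | some p =>
            if isInternal T (p ++ [0]) then descendR T (size T) (p ++ [0])
            else ascend prev (size T) p
      prev ++ [next]

def Hstar (T : PTree) (k : ℕ) : ℤ :=
  if k = 0 ∨ size T ≤ k then 0 else ((iota T (mirroredEnum T k)).length : ℤ)

end PTree

open PTree

namespace PTree

mutual
theorem size_pos : ∀ t : PTree, 1 ≤ size t
  | node ts => by simp only [size]; omega
end

theorem sizeList_eq_zero : ∀ ts : List PTree, sizeList ts = 0 → ts = []
  | [], _ => rfl
  | t :: ts, h => by
      simp only [sizeList] at h
      have := size_pos t; omega

theorem eq_leaf_of_size_eq_one : ∀ t : PTree, size t = 1 → t = node []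
  | node ts, h => by
      simp only [size] at h
      rw [sizeList_eq_zero ts (by omega)]

mutual
theorem hlen : ∀ (t : PTree) (d : ℕ), (heightsAux t d).length = size t
  | node ts, d => by
      simp only [heightsAux, size, List.length_cons, hlenList ts (d+1)]; omega
theorem hlenList : ∀ (ts : List PTree) (d : ℕ), (heightsListAux ts d).length = sizeList ts
  | [], _ => rfl
  | t :: ts, d => by
      simp only [heightsListAux, sizeList, List.length_append, hlen t d, hlenList ts d]
end

mutual
theorem hsucc : ∀ (t : PTree) (d : ℕ), heightsAux t (d + 1) = (heightsAux t d).map (· + 1)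
  | node ts, d => by
      simp only [heightsAux, List.map_cons, hsuccList ts (d+1)]
theorem hsuccList : ∀ (ts : List PTree) (d : ℕ),
    heightsListAux ts (d + 1) = (heightsListAux ts d).map (· + 1)
  | [], _ => rfl
  | t :: ts, d => by
      simp only [heightsListAux, List.map_append, hsucc t d, hsuccList ts d]
end

theorem hhead : ∀ (t : PTree) (d : ℕ), (heightsAux t d).head? = some d
  | node ts, d => by simp [heightsAux]

theorem hheadList : ∀ (ts : List PTree) (d : ℕ), ts ≠ [] → (heightsListAux ts d).head? = some d
  | t :: ts, d, _ => by
      simp only [heightsListAux]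
      cases t with
      | node us => simp [heightsAux]

mutual
theorem hge : ∀ (t : PTree) (d : ℕ), ∀ x ∈ heightsAux t d, d ≤ x
  | node ts, d => by
      simp only [heightsAux, List.mem_cons]
      rintro x (rfl | hx)
      · exact le_refl _
      · have := hgeList ts (d+1) x hx; omega
theorem hgeList : ∀ (ts : List PTree) (d : ℕ), ∀ x ∈ heightsListAux ts d, d ≤ x
  | [], _ => by simp [heightsListAux]
  | t :: ts, d => by
      simp only [heightsListAux, List.mem_append]
      rintro x (hx | hx)
      · exact hge t d x hx
      · exact hgeList ts d x hx
end

mutual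
theorem hchain : ∀ (t : PTree) (d : ℕ), List.Chain' (fun a b => b ≤ a + 1) (heightsAux t d)
  | node ts, d => by
      simp only [heightsAux]
      cases hts : ts with
      | nil => simp [heightsListAux, List.Chain']
      | cons u us =>
          rw [List.Chain', List.isChain_cons]
          refine ⟨?_, hchainList (u :: us) (d+1)⟩
          intro y hy
          rw [hheadList (u :: us) (d+1) (by simp)] at hy
          simp at hy; omega
theorem hchainList : ∀ (ts : List PTree) (d : ℕ),
    List.Chain' (fun a b => b ≤ a + 1) (heightsListAux ts d)
  | [], _ => by simp [heightsListAux, List.Chain']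
  | t :: ts, d => by
      simp only [heightsListAux]
      refine List.IsChain.append (hchain t d) (hchainList ts d) ?_
      intro x hx y hy
      have hx' : x ∈ heightsAux t d := List.mem_of_mem_getLast? hx
      have := hge t d x hx'
      cases hts : ts with
      | nil => subst hts; simp [heightsListAux] at hy
      | cons u us =>
          subst hts
          rw [hheadList (u :: us) d (by simp)] at hy
          simp at hy; omega
end

theorem H_zero (t : PTree) : H t 0 = 0 := by
  cases t with
  | node ts => simp [H, heightsAux]

theorem H_default (t : PTree) {k : ℕ} (h : size t ≤ k) : H t k = 0 := by
  unfold H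
  exact List.getD_eq_default _ _ (by rw [hlen]; exact h)

theorem H_step (t : PTree) (k : ℕ) : H t (k + 1) ≤ H t k + 1 := by
  by_cases h : k + 1 < size t
  · unfold H
    have hl : k + 1 < (heightsAux t 0).length := by rw [hlen]; exact h
    have hk : k < (heightsAux t 0).length := by omega
    rw [List.getD_eq_getElem _ _ hl, List.getD_eq_getElem _ _ hk]
    have := List.isChain_iff_getElem.mp (hchain t 0) k (by omega)
    simpa [List.get_eq_getElem] using this
  · rw [H_default t (by omega)]; omega

theorem H_le (t : PTree) (k : ℕ) : H t k ≤ k := by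
  induction k with
  | zero => rw [H_zero]
  | succ n ih => have := H_step t n; omega

theorem H_pos (t : PTree) {k : ℕ} (h1 : 1 ≤ k) (h2 : k < size t) : 1 ≤ H t k := by
  cases t with
  | node ts =>
      unfold H
      have hl : k < (heightsAux (node ts) 0).length := by rw [hlen]; exact h2
      rw [List.getD_eq_getElem _ _ hl]
      have hmem : (heightsAux (node ts) 0)[k] ∈ heightsAux (node ts) 0 := List.getElem_mem _
      simp only [heightsAux] at hmem hl ⊢
      obtain ⟨k', rfl⟩ : ∃ k', k = k' + 1 := ⟨k - 1, by omega⟩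
      simp only [List.getElem_cons_succ]
      exact hgeList ts 1 _ (List.getElem_mem _)

end PTree
namespace PTree

theorem size_rot : ∀ t : PTree, size (rot t) + 1 = 2 * size t
  | node [] => by simp [rot, size, sizeList]
  | node (t :: ts) => by
      have h1 := size_rot t
      have h2 := size_rot (node ts)
      simp only [rot, size, sizeList] at *
      omega

theorem H_decomp1 (t : PTree) (ts : List PTree) {p : ℕ} (hp : p < size t) :
    H (node (t :: ts)) (p + 1) = H t p + 1 := by
  unfold H
  simp only [heightsAux, heightsListAux, List.getD_cons_succ]
  rw [List.getD_append _ _ _ _ (by rw [hlen]; exact hp)]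
  rw [hsucc t 0]
  rw [List.getD_eq_getElem _ _ (by simpa [hlen] using hp),
    List.getD_eq_getElem _ _ (by rw [hlen]; exact hp)]
  simp

theorem H_decomp2 (t : PTree) (ts : List PTree) {q : ℕ} (hq : 1 ≤ q) :
    H (node (t :: ts)) (size t + q) = H (node ts) q := by
  unfold H
  obtain ⟨q', rfl⟩ : ∃ q', q = q' + 1 := ⟨q - 1, by omega⟩
  have h1 : size t + (q' + 1) = (size t + q') + 1 := by omega
  simp only [heightsAux, heightsListAux, h1, List.getD_cons_succ]
  rw [List.getD_append_right _ _ _ _ (by rw [hlen]; omega)]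
  rw [hlen]
  congr 1
  omega

theorem Hrot_decomp1 (t : PTree) (ts : List PTree) {p : ℕ} (hp : p + 1 ≤ 2 * size t) :
    H (rot (node (t :: ts))) (p + 1) = H (rot t) p + 1 := by
  have hsr := size_rot t
  have hlt : ∀ d, (heightsAux (rot t) d).length = size (rot t) := fun d => hlen _ d
  unfold H
  simp only [rot, heightsAux, heightsListAux, List.append_nil, List.getD_cons_succ]
  by_cases hcase : p < 2 * size t - 1
  · rw [List.getD_append _ _ _ _ (by rw [hlt]; omega)]
    rw [show (0:ℕ) + 1 = 0 + 1 from rfl, hsucc (rot t) 0]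
    rw [List.getD_eq_getElem _ _ (by simp only [List.length_map, hlt]; omega),
      List.getD_eq_getElem _ _ (by rw [hlt]; omega)]
    simp
  · -- p = 2 * size t - 1 : left hits head of second block = 1, right is default 0
    rw [List.getD_append_right _ _ _ _ (by rw [hlt]; omega)]
    rw [hlt]
    have h0 : p - size (rot t) = 0 := by omega
    rw [h0]
    rw [List.getD_eq_default (heightsAux (rot t) 0) 0 (n := p) (by rw [hlt]; omega)]
    cases hrts : rot (node ts) with
    | node us => simp [heightsAux, hsucc]

theorem Hrot_decomp2 (t : PTree) (ts : List PTree) {q : ℕ} (hq : q + 1 < 2 * size (node ts)) :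
    H (rot (node (t :: ts))) (2 * size t + q) = H (rot (node ts)) q + 1 := by
  have hsr := size_rot t
  have hsr' := size_rot (node ts)
  unfold H
  have h1 : 2 * size t + q = (size (rot t) + q) + 1 := by omega
  simp only [rot, heightsAux, heightsListAux, List.append_nil, h1, List.getD_cons_succ]
  rw [List.getD_append_right _ _ _ _ (by rw [hlen]; omega)]
  rw [hlen]
  have h2 : size (rot t) + q - size (rot t) = q := by omega
  rw [h2, hsucc (rot (node ts)) 0]
  have hq' : q < (heightsAux (rot (node ts)) 0).length := by rw [hlen]; omega
  rw [List.getD_eq_getElem _ _ (by simpa using hq'), List.getD_eq_getElem _ _ hq']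
  simp

end PTree
namespace PTree

theorem rot_leaf' : rot (node []) = node [] := by simp [rot]
theorem rot_cons (t : PTree) (ts : List PTree) :
    rot (node (t :: ts)) = node [rot t, rot (node ts)] := by simp [rot]

theorem size_cons (t : PTree) (ts : List PTree) :
    size (node (t :: ts)) = size t + size (node ts) := by
  simp only [size, sizeList]; omega

theorem two_le_size_cons (t : PTree) (ts : List PTree) : 2 ≤ size (node (t :: ts)) := by
  rw [size_cons]; have := size_pos t; have := size_pos (node ts); omega

theorem size_itr : ∀ t : PTree, 2 ≤ size t → size (internalTree (rot t)) + 1 = size t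
  | node [], h => by simp [size, sizeList] at h
  | node (node [] :: ts), h => by
      cases ts with
      | nil => simp [rot, internalTree, internalList, size, sizeList]
      | cons v vs =>
        have ih := size_itr (node (v :: vs)) (two_le_size_cons v vs)
        rw [rot_cons] at ih
        simp only [rot_cons, rot_leaf']
        simp only [internalTree, internalList, size, sizeList] at ih ⊢
        omega
  | node (node (u :: us) :: ts), h => by
      have ih1 := size_itr (node (u :: us)) (two_le_size_cons u us)
      rw [rot_cons] at ih1
      cases ts with
      | nil =>
        simp only [rot_cons, rot_leaf']
        simp only [internalTree, internalList, size, sizeList] at ih1 ⊢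
        omega
      | cons v vs =>
        have ih2 := size_itr (node (v :: vs)) (two_le_size_cons v vs)
        rw [rot_cons] at ih2
        simp only [rot_cons]
        simp only [internalTree, internalList, size, sizeList] at ih1 ih2 ⊢
        omega

theorem His_default (X : PTree) {i : ℕ} (h2 : 2 ≤ size X) (hi : size X - 1 ≤ i) :
    H (internalTree (rot X)) i = 0 := by
  apply H_default
  have := size_itr X h2
  omega

end PTree
namespace PTree

theorem itr_node (l : List PTree) : internalTree (node l) = node (internalList l) := by
  simp [internalTree]

theorem heightsAux_node (l : List PTree) (d : ℕ) :
    heightsAux (node l) d = d :: heightsListAux l (d + 1) := by simp [heightsAux]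

theorem heightsListAux_cons (x : PTree) (l : List PTree) (d : ℕ) :
    heightsListAux (x :: l) d = heightsAux x d ++ heightsListAux l d := by simp [heightsListAux]

theorem heightsListAux_nil (d : ℕ) : heightsListAux [] d = [] := by simp [heightsListAux]

theorem H_node_getD (l : List PTree) (k : ℕ) :
    H (node l) (k + 1) = (heightsListAux l 1).getD k 0 := by
  unfold H
  rw [heightsAux_node (l := l) (d := 0), List.getD_cons_succ]

theorem getD_hsucc (X : PTree) {p : ℕ} (hp : p < size X) :
    (heightsAux X 1).getD p 0 = H X p + 1 := by
  rw [show (1:ℕ) = 0 + 1 from rfl, hsucc]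
  unfold H
  rw [List.getD_eq_getElem _ _ (by simp [hlen]; exact hp),
    List.getD_eq_getElem _ _ (by rw [hlen]; exact hp)]
  simp

theorem His_decomp1 (t : PTree) (ts : List PTree) {p : ℕ} (hp : p + 1 < size t) :
    H (internalTree (rot (node (t :: ts)))) (p + 1) = H (internalTree (rot t)) p + 1 := by
  cases t with
  | node us =>
    cases us with
    | nil => simp [size, sizeList] at hp
    | cons u us =>
      have h2 : 2 ≤ size (node (u :: us)) := two_le_size_cons u us
      have hszA := size_itr (node (u :: us)) h2
      simp only [rot_cons, itr_node] at hszA ⊢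
      rw [show internalList [node [rot u, rot (node us)], rot (node ts)]
           = node (internalList [rot u, rot (node us)]) :: internalList [rot (node ts)] from by
        simp [internalList, itr_node]]
      rw [H_node_getD, heightsListAux_cons]
      rw [List.getD_append _ _ _ _ (by rw [hlen _ 1]; omega)]
      exact getD_hsucc _ (by omega)

theorem His_decomp2 (t : PTree) (ts : List PTree) {q : ℕ} (hq : q + 1 < size (node ts)) :
    H (internalTree (rot (node (t :: ts)))) (size t + q)
      = H (internalTree (rot (node ts))) q + 1 := by
  cases ts with
  | nil => simp [size, sizeList] at hq
  | cons v vs =>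
    have h2 : 2 ≤ size (node (v :: vs)) := two_le_size_cons v vs
    have hszB := size_itr (node (v :: vs)) h2
    simp only [rot_cons, itr_node] at hszB ⊢
    cases t with
    | node us =>
      cases us with
      | nil =>
        simp only [rot_leaf']
        rw [show internalList [node [], node [rot v, rot (node vs)]]
             = [node (internalList [rot v, rot (node vs)])] from by
          simp [internalList, itr_node]]
        rw [show size (node ([] : List PTree)) + q = q + 1 from by simp [size, sizeList]; omega]
        rw [H_node_getD, heightsListAux_cons, heightsListAux_nil, List.append_nil]
        exact getD_hsucc _ (by omega)
      | cons u us =>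
        have h2u : 2 ≤ size (node (u :: us)) := two_le_size_cons u us
        have hszA := size_itr (node (u :: us)) h2u
        simp only [rot_cons, itr_node] at hszA
        simp only [rot_cons]
        rw [show internalList [node [rot u, rot (node us)], node [rot v, rot (node vs)]]
             = [node (internalList [rot u, rot (node us)]),
                node (internalList [rot v, rot (node vs)])] from by
          simp [internalList, itr_node]]
        rw [show size (node (u :: us)) + q
             = ((size (node (u :: us)) - 1) + q) + 1 from by omega]
        rw [H_node_getD, heightsListAux_cons, heightsListAux_cons, heightsListAux_nil,
          List.append_nil]
        rw [List.getD_append_right _ _ _ _ (by rw [hlen _ 1]; omega)]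
        rw [hlen _ 1]
        rw [show size (node (u :: us)) - 1 + q - size (node (internalList [rot u, rot (node us)]))
             = q from by omega]
        exact getD_hsucc _ (by omega)

end PTree
namespace PTree

theorem getD_map_lt {α β : Type*} (f : α → β) (l : List α) {n : ℕ} (h : n < l.length)
    (d : β) (d' : α) : (l.map f).getD n d = f (l.getD n d') := by
  rw [List.getD_eq_getElem _ _ (by simpa using h), List.getD_eq_getElem _ _ h]
  simp

theorem verticesAux_node (l : List PTree) (p : List ℕ) :
    verticesAux (node l) p = p :: verticesListAux l p 0 := by simp [verticesAux]

theorem verticesListAux_cons (t : PTree) (ts : List PTree) (p : List ℕ) (i : ℕ) :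
    verticesListAux (t :: ts) p i = verticesAux t (p ++ [i]) ++ verticesListAux ts p (i + 1) := by
  simp [verticesListAux]

theorem verticesListAux_nil (p : List ℕ) (i : ℕ) : verticesListAux [] p i = [] := by
  simp [verticesListAux]

mutual
theorem vlen : ∀ (t : PTree) (p : List ℕ), (verticesAux t p).length = size t
  | node ts, p => by
      rw [verticesAux_node]
      simp only [List.length_cons, size, vlenList ts p 0]
      omega
theorem vlenList : ∀ (ts : List PTree) (p : List ℕ) (i : ℕ),
    (verticesListAux ts p i).length = sizeList ts
  | [], _, _ => by simp [verticesListAux_nil, sizeList]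
  | t :: ts, p, i => by
      rw [verticesListAux_cons]
      simp only [List.length_append, sizeList, vlen t _, vlenList ts p (i+1)]
end

mutual
theorem vshift : ∀ (t : PTree) (p : List ℕ),
    verticesAux t p = (verticesAux t []).map (p ++ ·)
  | node ts, p => by
      rw [verticesAux_node, verticesAux_node, List.map_cons]
      rw [vshiftList ts p 0]
      simp
theorem vshiftList : ∀ (ts : List PTree) (p : List ℕ) (i : ℕ),
    verticesListAux ts p i = (verticesListAux ts [] i).map (p ++ ·)
  | [], _, _ => by simp [verticesListAux_nil]
  | t :: ts, p, i => by
      rw [verticesListAux_cons, verticesListAux_cons, List.map_append]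
      rw [vshift t (p ++ [i]), vshift t ([] ++ [i]), vshiftList ts p (i+1),
        vshiftList ts [] (i+1)]
      simp [List.map_map, Function.comp_def, List.append_assoc]
end

theorem vertices_rot_decomp (A B : PTree) :
    vertices (node [A, B]) = [] :: ((vertices A).map (0 :: ·) ++ (vertices B).map (1 :: ·)) := by
  unfold vertices
  rw [verticesAux_node, verticesListAux_cons, verticesListAux_cons, verticesListAux_nil,
    List.append_nil, vshift A ([] ++ [0]), vshift B ([] ++ [1])]
  simp [Function.comp_def]

theorem isInternal_zero (A B : PTree) (p : List ℕ) :
    isInternal (node [A, B]) (0 :: p) = isInternal A p := by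
  unfold isInternal
  rw [show subtreeAt (0 :: p) (node [A, B]) = subtreeAt p A from by simp [subtreeAt]]

theorem isInternal_one (A B : PTree) (p : List ℕ) :
    isInternal (node [A, B]) (1 :: p) = isInternal B p := by
  unfold isInternal
  rw [show subtreeAt (1 :: p) (node [A, B]) = subtreeAt p B from by simp [subtreeAt]]

theorem isInternal_root (A B : PTree) : isInternal (node [A, B]) [] = true := by
  simp [isInternal, subtreeAt]

theorem iv_rot_decomp (A B : PTree) :
    internalVertices (node [A, B])
      = [] :: ((internalVertices A).map (0 :: ·) ++ (internalVertices B).map (1 :: ·)) := by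
  unfold internalVertices
  rw [vertices_rot_decomp]
  rw [List.filter_cons_of_pos (by simp [isInternal_root])]
  rw [List.filter_append, List.filter_map, List.filter_map]
  have hA : List.filter ((fun p => isInternal (node [A, B]) p) ∘ fun x => 0 :: x) (vertices A)
      = List.filter (fun p => isInternal A p) (vertices A) :=
    List.filter_congr (fun x _ => by simp [Function.comp, isInternal_zero])
  have hB : List.filter ((fun p => isInternal (node [A, B]) p) ∘ fun x => 1 :: x) (vertices B)
      = List.filter (fun p => isInternal B p) (vertices B) :=
    List.filter_congr (fun x _ => by simp [Function.comp, isInternal_one])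
  rw [hA, hB]

theorem ivlen : ∀ T : PTree, (internalVertices (rot T)).length + 1 = size T
  | node [] => by
      rw [rot_leaf']
      simp [internalVertices, vertices, verticesAux, verticesListAux, isInternal, subtreeAt,
        size, sizeList]
  | node (t :: ts) => by
      have ih1 := ivlen t
      have ih2 := ivlen (node ts)
      rw [rot_cons, iv_rot_decomp]
      simp only [List.length_cons, List.length_append, List.length_map, size_cons]
      omega

end PTree
namespace PTree

theorem vv_len (X : PTree) : (vertices X).length = size X := by
  unfold vertices; exact vlen X []

theorem vv_zero (X : PTree) : (vertices (rot X)).getD 0 [] = [] := by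
  cases hr : rot X with
  | node l => unfold vertices; rw [verticesAux_node]; rfl

theorem vv_decomp1 (t : PTree) (ts : List PTree) {p : ℕ} (hp : p < 2 * size t - 1) :
    (vertices (rot (node (t :: ts)))).getD (p + 1) [] = 0 :: (vertices (rot t)).getD p [] := by
  have hlv : (vertices (rot t)).length = 2 * size t - 1 := by
    rw [vv_len]; have := size_rot t; omega
  rw [rot_cons, vertices_rot_decomp, List.getD_cons_succ]
  rw [List.getD_append _ _ _ _ (by rw [List.length_map, hlv]; exact hp)]
  exact getD_map_lt _ _ (by rw [hlv]; exact hp) _ _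

theorem vv_decomp2 (t : PTree) (ts : List PTree) {q : ℕ} (hq : q < 2 * size (node ts) - 1) :
    (vertices (rot (node (t :: ts)))).getD (2 * size t + q) []
      = 1 :: (vertices (rot (node ts))).getD q [] := by
  have hlv : (vertices (rot t)).length = 2 * size t - 1 := by
    rw [vv_len]; have := size_rot t; omega
  have hlv' : (vertices (rot (node ts))).length = 2 * size (node ts) - 1 := by
    rw [vv_len]; have := size_rot (node ts); omega
  have hidx : 2 * size t + q = ((2 * size t - 1) + q) + 1 := by have := size_pos t; omega
  rw [rot_cons, vertices_rot_decomp, hidx, List.getD_cons_succ]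
  rw [List.getD_append_right _ _ _ _ (by rw [List.length_map, hlv]; omega)]
  rw [List.length_map, hlv]
  rw [show 2 * size t - 1 + q - (2 * size t - 1) = q from by omega]
  exact getD_map_lt _ _ (by rw [hlv']; exact hq) _ _

theorem iv_zero (t : PTree) (ts : List PTree) :
    (internalVertices (rot (node (t :: ts)))).getD 0 [] = [] := by
  rw [rot_cons, iv_rot_decomp]; rfl

theorem iv_decomp1 (t : PTree) (ts : List PTree) {p : ℕ} (hp : p < size t - 1) :
    (internalVertices (rot (node (t :: ts)))).getD (p + 1) []
      = 0 :: (internalVertices (rot t)).getD p [] := by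
  have hlv : (internalVertices (rot t)).length = size t - 1 := by have := ivlen t; omega
  rw [rot_cons, iv_rot_decomp, List.getD_cons_succ]
  rw [List.getD_append _ _ _ _ (by rw [List.length_map, hlv]; exact hp)]
  exact getD_map_lt _ _ (by rw [hlv]; exact hp) _ _

theorem iv_decomp2 (t : PTree) (ts : List PTree) {q : ℕ} (hq : q < size (node ts) - 1) :
    (internalVertices (rot (node (t :: ts)))).getD (size t + q) []
      = 1 :: (internalVertices (rot (node ts))).getD q [] := by
  have hlv : (internalVertices (rot t)).length = size t - 1 := by have := ivlen t; omega
  have hlv' : (internalVertices (rot (node ts))).length = size (node ts) - 1 := by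
    have := ivlen (node ts); omega
  have hidx : size t + q = ((size t - 1) + q) + 1 := by have := size_pos t; omega
  rw [rot_cons, iv_rot_decomp, hidx, List.getD_cons_succ]
  rw [List.getD_append_right _ _ _ _ (by rw [List.length_map, hlv]; omega)]
  rw [List.length_map, hlv]
  rw [show size t - 1 + q - (size t - 1) = q from by omega]
  exact getD_map_lt _ _ (by rw [hlv']; exact hq) _ _

/-- Conjunct 4: identification of internal vertices of `rot T` with `v_{j(k)}`. -/
theorem conj4 : ∀ (N : ℕ) (T : PTree), size T ≤ N → 2 ≤ size T → ∀ k, k ≤ size T - 2 →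
    (internalVertices (rot T)).getD k [] =
      (vertices (rot T)).getD (2 * k + 1 - H T (k + 1)) []
  | 0, T, hN, h2, _, _ => by omega
  | N + 1, node [], hN, h2, _, _ => by simp [size, sizeList] at h2
  | N + 1, node (t :: ts), hN, h2, k, hk => by
    have hszc := size_cons t ts
    have hn1 := size_pos t
    have hn2 := size_pos (node ts)
    rcases Nat.eq_zero_or_pos k with rfl | hkpos
    · -- k = 0
      have hH1 : H (node (t :: ts)) 1 = 1 := by
        rw [show (1:ℕ) = 0 + 1 from rfl, H_decomp1 t ts (by omega), H_zero]
      rw [hH1, iv_zero]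
      exact (vv_zero _).symm
    rcases le_or_gt k (size t - 1) with hreg | hreg
    · -- t region, 1 ≤ k ≤ size t - 1 (so size t ≥ 2)
      have hn1' : 2 ≤ size t := by omega
      obtain ⟨k', rfl⟩ : ∃ k', k = k' + 1 := ⟨k - 1, by omega⟩
      have hA : H (node (t :: ts)) (k' + 1 + 1) = H t (k' + 1) + 1 :=
        H_decomp1 t ts (by omega)
      have hle := H_le t (k' + 1)
      have hposk := H_pos t (k := k' + 1) (by omega) (by omega)
      have ih := conj4 N t (by omega) hn1' k' (by omega)
      have hm : 2 * k' + 1 - H t (k' + 1) ≤ 2 * (size t - 2) + 1 := by omega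
      have hv : 2 * (k' + 1) + 1 - H (node (t :: ts)) (k' + 1 + 1)
          = (2 * k' + 1 - H t (k' + 1)) + 1 := by rw [hA]; omega
      rw [hv, iv_decomp1 t ts (by omega), vv_decomp1 t ts (by omega), ih]
    · -- ts region, size t ≤ k ≤ size T - 2
      obtain ⟨r, rfl⟩ : ∃ r, k = size t + r := ⟨k - size t, by omega⟩
      have hn2' : 2 ≤ size (node ts) := by omega
      have hA : H (node (t :: ts)) (size t + r + 1) = H (node ts) (r + 1) := by
        rw [show size t + r + 1 = size t + (r + 1) from by omega]
        exact H_decomp2 t ts (by omega)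
      have hle := H_le (node ts) (r + 1)
      have ih := conj4 N (node ts) (by omega) hn2' r (by omega)
      have hv : 2 * (size t + r) + 1 - H (node (t :: ts)) (size t + r + 1)
          = 2 * size t + (2 * r + 1 - H (node ts) (r + 1)) := by rw [hA]; omega
      rw [hv, iv_decomp2 t ts (by omega), vv_decomp2 t ts (by omega), ih]

end PTree
namespace PTree

def BlockStmt (T : PTree) (k : ℕ) : Prop :=
  (2 * (k + 1) + 1 - H T (k + 2) = (2 * k + 1 - H T (k + 1)) + 1 →
    H (rot T) (2 * k + 1 - H T (k + 1)) = H (internalTree (rot T)) k ∧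
    H (rot T) (2 * k + 1 - H T (k + 1) + 1) = H (internalTree (rot T)) (k + 1)) ∧
  (2 * (k + 1) + 1 - H T (k + 2) = (2 * k + 1 - H T (k + 1)) + 2 →
    H (rot T) (2 * k + 1 - H T (k + 1)) = H (internalTree (rot T)) k ∧
    H (rot T) (2 * k + 1 - H T (k + 1) + 1) = H (internalTree (rot T)) (k + 1) ∧
    H (rot T) (2 * k + 1 - H T (k + 1) + 2) = H (internalTree (rot T)) (k + 1)) ∧
  ((2 * k + 1 - H T (k + 1)) + 2 < 2 * (k + 1) + 1 - H T (k + 2) →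
    H (rot T) (2 * k + 1 - H T (k + 1)) = H (internalTree (rot T)) k ∧
    H (rot T) (2 * k + 1 - H T (k + 1) + 1) = H (internalTree (rot T)) k + 1 ∧
    H (rot T) (2 * k + 1 - H T (k + 1) + 2) = H (internalTree (rot T)) k + 1 ∧
    StrictAntiOn (fun m => H (rot T) m)
      (Set.Icc (2 * k + 1 - H T (k + 1) + 2) (2 * (k + 1) + 1 - H T (k + 2))) ∧
    H (rot T) (2 * (k + 1) + 1 - H T (k + 2)) = H (internalTree (rot T)) (k + 1))

theorem BlockStmt_of_i {T : PTree} {k : ℕ}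
    (hgap : 2 * (k + 1) + 1 - H T (k + 2) = (2 * k + 1 - H T (k + 1)) + 1)
    (h1 : H (rot T) (2 * k + 1 - H T (k + 1)) = H (internalTree (rot T)) k)
    (h2 : H (rot T) (2 * k + 1 - H T (k + 1) + 1) = H (internalTree (rot T)) (k + 1)) :
    BlockStmt T k :=
  ⟨fun _ => ⟨h1, h2⟩, fun h => by omega, fun h => by omega⟩

theorem BlockStmt_of_ii {T : PTree} {k : ℕ}
    (hgap : 2 * (k + 1) + 1 - H T (k + 2) = (2 * k + 1 - H T (k + 1)) + 2)
    (h1 : H (rot T) (2 * k + 1 - H T (k + 1)) = H (internalTree (rot T)) k)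
    (h2 : H (rot T) (2 * k + 1 - H T (k + 1) + 1) = H (internalTree (rot T)) (k + 1))
    (h3 : H (rot T) (2 * k + 1 - H T (k + 1) + 2) = H (internalTree (rot T)) (k + 1)) :
    BlockStmt T k :=
  ⟨fun h => by omega, fun _ => ⟨h1, h2, h3⟩, fun h => by omega⟩

theorem BlockStmt_of_iii {T : PTree} {k : ℕ}
    (hgap : (2 * k + 1 - H T (k + 1)) + 2 < 2 * (k + 1) + 1 - H T (k + 2))
    (h1 : H (rot T) (2 * k + 1 - H T (k + 1)) = H (internalTree (rot T)) k)
    (h2 : H (rot T) (2 * k + 1 - H T (k + 1) + 1) = H (internalTree (rot T)) k + 1)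
    (h3 : H (rot T) (2 * k + 1 - H T (k + 1) + 2) = H (internalTree (rot T)) k + 1)
    (h4 : StrictAntiOn (fun m => H (rot T) m)
      (Set.Icc (2 * k + 1 - H T (k + 1) + 2) (2 * (k + 1) + 1 - H T (k + 2))))
    (h5 : H (rot T) (2 * (k + 1) + 1 - H T (k + 2)) = H (internalTree (rot T)) (k + 1)) :
    BlockStmt T k :=
  ⟨fun h => by omega, fun h => by omega, fun _ => ⟨h1, h2, h3, h4, h5⟩⟩

theorem sAO_shift (f g : ℕ → ℕ) {a b : ℕ} (o c : ℕ)
    (hf : ∀ i, a ≤ i → i ≤ b → f (i + o) = g i + c)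
    (h : StrictAntiOn g (Set.Icc a b)) :
    StrictAntiOn f (Set.Icc (a + o) (b + o)) := by
  intro x hx y hy hxy
  simp only [Set.mem_Icc] at hx hy
  have hx' : x = (x - o) + o := by omega
  have hy' : y = (y - o) + o := by omega
  rw [hx', hy', hf _ (by omega) (by omega), hf _ (by omega) (by omega)]
  have := h (Set.mem_Icc.mpr ⟨by omega, by omega⟩) (Set.mem_Icc.mpr ⟨by omega, by omega⟩)
    (show x - o < y - o from by omega)
  omega

theorem sAO_snoc (f : ℕ → ℕ) {a b : ℕ} (hab : a ≤ b)
    (h : StrictAntiOn f (Set.Icc a b))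
    (htop : ∀ i, a ≤ i → i ≤ b → f (b + 1) < f i) :
    StrictAntiOn f (Set.Icc a (b + 1)) := by
  intro x hx y hy hxy
  simp only [Set.mem_Icc] at hx hy
  rcases eq_or_lt_of_le hy.2 with hyb | hyb
  · rw [hyb]
    exact htop x hx.1 (by omega)
  · exact h (Set.mem_Icc.mpr ⟨hx.1, by omega⟩) (Set.mem_Icc.mpr ⟨hy.1, by omega⟩) hxy

/-- Generic transfer of a block statement from a subtree `X` to `T`, when on the whole
block index range the height process of `rot T` is that of `rot X` shifted by `o`
in time and `1` in space. -/
theorem BlockStmt_transfer (T X : PTree) (k k' o : ℕ)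
    (hjk : 2 * k + 1 - H T (k + 1) = (2 * k' + 1 - H X (k' + 1)) + o)
    (hjk1 : 2 * (k + 1) + 1 - H T (k + 2) = (2 * (k' + 1) + 1 - H X (k' + 2)) + o)
    (hR : ∀ i, 2 * k' + 1 - H X (k' + 1) ≤ i → i ≤ 2 * (k' + 1) + 1 - H X (k' + 2) →
      H (rot T) (i + o) = H (rot X) i + 1)
    (his0 : H (internalTree (rot T)) k = H (internalTree (rot X)) k' + 1)
    (his1 : H (internalTree (rot T)) (k + 1) = H (internalTree (rot X)) (k' + 1) + 1)
    (hB : BlockStmt X k') : BlockStmt T k := by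
  obtain ⟨B1, B2, B3⟩ := hB
  set a := 2 * k' + 1 - H X (k' + 1) with ha
  set b := 2 * (k' + 1) + 1 - H X (k' + 2) with hb
  refine ⟨?_, ?_, ?_⟩
  · intro hgap
    have hgap' : b = a + 1 := by omega
    obtain ⟨c1, c2⟩ := B1 hgap'
    constructor
    · rw [hjk, hR a le_rfl (by omega), c1, his0]
    · rw [show 2 * k + 1 - H T (k + 1) + 1 = (a + 1) + o from by omega,
        hR (a + 1) (by omega) (by omega), c2, his1]
  · intro hgap
    have hgap' : b = a + 2 := by omega
    obtain ⟨c1, c2, c3⟩ := B2 hgap'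
    refine ⟨?_, ?_, ?_⟩
    · rw [hjk, hR a le_rfl (by omega), c1, his0]
    · rw [show 2 * k + 1 - H T (k + 1) + 1 = (a + 1) + o from by omega,
        hR (a + 1) (by omega) (by omega), c2, his1]
    · rw [show 2 * k + 1 - H T (k + 1) + 2 = (a + 2) + o from by omega,
        hR (a + 2) (by omega) (by omega), c3, his1]
  · intro hgap
    have hgap' : a + 2 < b := by omega
    obtain ⟨c1, c2, c3, c4, c5⟩ := B3 hgap'
    refine ⟨?_, ?_, ?_, ?_, ?_⟩
    · rw [hjk, hR a le_rfl (by omega), c1, his0]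
    · rw [show 2 * k + 1 - H T (k + 1) + 1 = (a + 1) + o from by omega,
        hR (a + 1) (by omega) (by omega), c2, his0]
    · rw [show 2 * k + 1 - H T (k + 1) + 2 = (a + 2) + o from by omega,
        hR (a + 2) (by omega) (by omega), c3, his0]
    · rw [show 2 * k + 1 - H T (k + 1) + 2 = (a + 2) + o from by omega, hjk1]
      exact sAO_shift _ _ o 1 (fun i h1 h2 => hR i (by omega) h2) c4
    · rw [hjk1, hR b (by omega) le_rfl, c5, his1]

end PTree
namespace PTree

theorem H_one (X : PTree) (h2 : 2 ≤ size X) : H X 1 = 1 := by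
  cases X with
  | node ts =>
    cases ts with
    | nil => simp [size, sizeList] at h2
    | cons v vs =>
      rw [show (1:ℕ) = 0 + 1 from rfl, H_decomp1 v vs (size_pos v), H_zero]

theorem size_nil_of_eq_one (ts : List PTree) (h : size (node ts) = 1) : ts = [] := by
  have : node ts = node [] := eq_leaf_of_size_eq_one _ h
  cases this; rfl

set_option maxHeartbeats 1000000 in
theorem blocks : ∀ (N : ℕ) (T : PTree), size T ≤ N → 2 ≤ size T → ∀ k, k ≤ size T - 2 →
    BlockStmt T k
  | 0, T, hN, h2, _, _ => by omega
  | N + 1, node [], hN, h2, _, _ => by simp [size, sizeList] at h2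
  | N + 1, node (t :: ts), hN, h2, k, hk => by
    have hszc := size_cons t ts
    have hn1 := size_pos t
    have hn2 := size_pos (node ts)
    have hNt : size t ≤ N := by omega
    have hNts : size (node ts) ≤ N := by omega
    rcases lt_or_ge k (size t - 1) with hkt | hkt
    · -- Region I : interior of the t-part (forces size t ≥ 2)
      have hn1' : 2 ≤ size t := by omega
      rcases Nat.eq_zero_or_pos k with rfl | hkpos
      · -- k = 0 : gap 1
        have hH1 : H (node (t :: ts)) (0 + 1) = 1 := by
          rw [H_decomp1 t ts (by omega), H_zero]
        have hH2 : H (node (t :: ts)) (0 + 2) = 2 := by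
          rw [show (0:ℕ) + 2 = 1 + 1 from rfl, H_decomp1 t ts (by omega), H_one t hn1']
        refine BlockStmt_of_i (by rw [hH1, hH2]) ?_ ?_
        · rw [show 2 * 0 + 1 - H (node (t :: ts)) (0 + 1) = 0 from by omega, H_zero, H_zero]
        · rw [show 2 * 0 + 1 - H (node (t :: ts)) (0 + 1) + 1 = 0 + 1 from by omega]
          rw [Hrot_decomp1 t ts (by omega), H_zero,
            His_decomp1 t ts (show 0 + 1 < size t from by omega), H_zero]
      · -- k ≥ 1 : transfer from t at k - 1
        obtain ⟨k', rfl⟩ : ∃ k', k = k' + 1 := ⟨k - 1, by omega⟩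
        have hA1 : H (node (t :: ts)) (k' + 1 + 1) = H t (k' + 1) + 1 :=
          H_decomp1 t ts (by omega)
        have hA2 : H (node (t :: ts)) (k' + 1 + 2) = H t (k' + 2) + 1 := by
          rw [show k' + 1 + 2 = (k' + 2) + 1 from rfl]
          exact H_decomp1 t ts (by omega)
        have hle1 := H_le t (k' + 1)
        have hle2 := H_le t (k' + 2)
        refine BlockStmt_transfer (node (t :: ts)) t (k' + 1) k' 1
          (by rw [hA1]; omega) (by rw [show k' + 1 + 1 = k' + 2 from rfl, hA2]; omega)
          (fun i h1 h2 => Hrot_decomp1 t ts (by omega))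
          (His_decomp1 t ts (by omega)) (His_decomp1 t ts (by omega))
          (blocks N t hNt hn1' k' (by omega))
    rcases eq_or_lt_of_le hkt with hkb | hkreg
    · -- Region II : boundary block k = size t - 1
      rcases le_or_gt 2 (size t) with hn1' | hn1'
      · -- size t ≥ 2 : use the top block of t
        obtain ⟨_, _, B3⟩ := blocks N t hNt hn1' (size t - 2) (by omega)
        rw [show size t - 2 + 1 = size t - 1 from by omega,
          show size t - 2 + 2 = size t from by omega] at B3
        have hHtn : H t (size t) = 0 := H_default t le_rfl
        have hHt1 := H_pos t (k := size t - 1) (by omega) (by omega)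
        have hHt2 := H_le t (size t - 1)
        obtain ⟨c1, c2, c3, c4, c5⟩ := B3 (by rw [hHtn]; omega)
        rw [hHtn] at c4 c5
        have hrtd : H (rot t) (2 * size t - 1) = 0 := by
          apply H_default; have := size_rot t; omega
        obtain rfl : k = size t - 1 := hkb.symm
        have hA1 : H (node (t :: ts)) (size t - 1 + 1) = H t (size t - 1) + 1 :=
          H_decomp1 t ts (by omega)
        have hA2 : H (node (t :: ts)) (size t - 1 + 2) = H (node ts) 1 := by
          rw [show size t - 1 + 2 = size t + 1 from by omega]
          exact H_decomp2 t ts (by omega)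
        have his0 : H (internalTree (rot (node (t :: ts)))) (size t - 1)
            = H (internalTree (rot t)) (size t - 2) + 1 := by
          rw [show size t - 1 = (size t - 2) + 1 from by omega]
          exact His_decomp1 t ts (by omega)
        -- the common start of the block
        have hidx1 : 2 * (size t - 1) + 1 - H (node (t :: ts)) (size t - 1 + 1)
            = (2 * (size t - 2) + 1 - H t (size t - 1)) + 1 := by rw [hA1]; omega
        have hstart : H (rot (node (t :: ts)))
            (2 * (size t - 1) + 1 - H (node (t :: ts)) (size t - 1 + 1))
            = H (internalTree (rot (node (t :: ts)))) (size t - 1) := by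
          rw [hidx1, Hrot_decomp1 t ts (by omega), c1, his0]
        have hmid1 : H (rot (node (t :: ts)))
            (2 * (size t - 1) + 1 - H (node (t :: ts)) (size t - 1 + 1) + 1)
            = H (internalTree (rot (node (t :: ts)))) (size t - 1) + 1 := by
          rw [hidx1, show (2 * (size t - 2) + 1 - H t (size t - 1)) + 1 + 1
            = ((2 * (size t - 2) + 1 - H t (size t - 1)) + 1) + 1 from rfl,
            Hrot_decomp1 t ts (by omega), c2, his0]
        have hmid2 : H (rot (node (t :: ts)))
            (2 * (size t - 1) + 1 - H (node (t :: ts)) (size t - 1 + 1) + 2)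
            = H (internalTree (rot (node (t :: ts)))) (size t - 1) + 1 := by
          rw [hidx1, show (2 * (size t - 2) + 1 - H t (size t - 1)) + 1 + 2
            = ((2 * (size t - 2) + 1 - H t (size t - 1)) + 2) + 1 from rfl,
            Hrot_decomp1 t ts (by omega), c3, his0]
        rcases le_or_gt 2 (size (node ts)) with hn2' | hn2'
        · -- size (node ts) ≥ 2 : block ends at 2 * size t
          have hT'1 : H (node ts) 1 = 1 := H_one _ hn2'
          have hisB : H (internalTree (rot (node (t :: ts)))) (size t - 1 + 1) = 1 := by
            rw [show size t - 1 + 1 = size t + 0 from by omega,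
              His_decomp2 t ts (by omega), H_zero]
          have hidx2 : 2 * (size t - 1 + 1) + 1 - H (node (t :: ts)) (size t - 1 + 2)
              = 2 * size t := by rw [hA2, hT'1]; omega
          refine BlockStmt_of_iii (by rw [hA1, hA2, hT'1]; omega) hstart hmid1 hmid2 ?_ ?_
          · rw [hidx1, hidx2,
              show (2 * (size t - 2) + 1 - H t (size t - 1)) + 1 + 2
                = ((2 * (size t - 2) + 1 - H t (size t - 1)) + 2) + 1 from by omega,
              show 2 * size t = (2 * (size t - 1) + 1) + 1 from by omega]
            exact sAO_shift _ _ 1 1 (fun i h1 h2 => Hrot_decomp1 t ts (by omega)) c4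
          · rw [hidx2, show 2 * size t = (2 * size t - 1) + 1 from by omega,
              Hrot_decomp1 t ts (by omega), hrtd, hisB]
        · -- size (node ts) = 1 : block ends at 2 * size t + 1
          have hT'1 : H (node ts) 1 = 0 := H_default _ (by omega)
          have hisB : H (internalTree (rot (node (t :: ts)))) (size t - 1 + 1) = 0 :=
            His_default _ h2 (by omega)
          have hrTtop : H (rot (node (t :: ts))) (2 * size t + 1) = 0 := by
            apply H_default; have := size_rot (node (t :: ts)); omega
          have hidx2 : 2 * (size t - 1 + 1) + 1 - H (node (t :: ts)) (size t - 1 + 2)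
              = 2 * size t + 1 := by rw [hA2, hT'1]; omega
          refine BlockStmt_of_iii (by rw [hA1, hA2, hT'1]; omega) hstart hmid1 hmid2 ?_ ?_
          · rw [hidx1, hidx2,
              show (2 * (size t - 2) + 1 - H t (size t - 1)) + 1 + 2
                = ((2 * (size t - 2) + 1 - H t (size t - 1)) + 2) + 1 from by omega,
              show 2 * size t + 1 = (2 * size t - 1 + 1) + 1 from by omega]
            apply sAO_snoc _ (by omega)
            · rw [show 2 * size t - 1 + 1 = 2 * size t from by omega,
                show 2 * size t = (2 * (size t - 1) + 1) + 1 from by omega]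
              exact sAO_shift _ _ 1 1 (fun i h1 h2 => Hrot_decomp1 t ts (by omega)) c4
            · intro i hi1 hi2
              rw [show 2 * size t - 1 + 1 + 1 = 2 * size t + 1 from by omega, hrTtop,
                show i = (i - 1) + 1 from by omega, Hrot_decomp1 t ts (by omega)]
              omega
          · rw [hidx2, hrTtop, hisB]
      · -- size t = 1 : k = 0
        have hsz1 : size t = 1 := by omega
        obtain rfl : k = 0 := by omega
        have hH1 : H (node (t :: ts)) (0 + 1) = 1 := H_one _ h2
        have hrt0 : H (rot t) 0 = 0 := H_zero _
        rcases le_or_gt 2 (size (node ts)) with hn2' | hn2'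
        · -- gap 2 : case (ii)
          have hH2 : H (node (t :: ts)) (0 + 2) = 1 := by
            rw [show (0:ℕ) + 2 = size t + 1 from by omega, H_decomp2 t ts (by omega),
              H_one _ hn2']
          have e1 : H (rot (node (t :: ts))) (0 + 1) = 1 := by
            rw [Hrot_decomp1 t ts (by omega), hrt0]
          have e2 : H (internalTree (rot (node (t :: ts)))) (0 + 1) = 1 := by
            rw [show (0:ℕ) + 1 = size t + 0 from by omega, His_decomp2 t ts (by omega), H_zero]
          have e3 : H (rot (node (t :: ts))) (2 * size t + 0) = 1 := by
            rw [Hrot_decomp2 t ts (by omega), H_zero]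
          refine BlockStmt_of_ii (by rw [hH1, hH2]) ?_ ?_ ?_
          · rw [show 2 * 0 + 1 - H (node (t :: ts)) (0 + 1) = 0 from by omega, H_zero, H_zero]
          · rw [show 2 * 0 + 1 - H (node (t :: ts)) (0 + 1) + 1 = 0 + 1 from by omega, e1, e2]
          · rw [show 2 * 0 + 1 - H (node (t :: ts)) (0 + 1) + 2 = 2 * size t + 0 from by omega,
              e3, e2]
        · -- size (node ts) = 1 : T = node [node []]
          have hH2 : H (node (t :: ts)) (0 + 2) = 0 := H_default _ (by omega)
          have hrTtop : H (rot (node (t :: ts))) 3 = 0 := by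
            apply H_default; have := size_rot (node (t :: ts)); omega
          have hmid : H (rot (node (t :: ts))) (0 + 1) = 1 := by
            rw [Hrot_decomp1 t ts (by omega), hrt0]
          have hmid2 : H (rot (node (t :: ts))) (2 * size t + 0) = 1 := by
            rw [Hrot_decomp2 t ts (by omega), H_zero]
          have hisB : H (internalTree (rot (node (t :: ts)))) (0 + 1) = 0 :=
            His_default _ h2 (by omega)
          refine BlockStmt_of_iii (by rw [hH1, hH2]; omega) ?_ ?_ ?_ ?_ ?_
          · rw [show 2 * 0 + 1 - H (node (t :: ts)) (0 + 1) = 0 from by omega, H_zero, H_zero]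
          · rw [show 2 * 0 + 1 - H (node (t :: ts)) (0 + 1) + 1 = 0 + 1 from by omega, hmid,
              H_zero]
          · rw [show 2 * 0 + 1 - H (node (t :: ts)) (0 + 1) + 2 = 2 * size t + 0 from by omega,
              hmid2, H_zero]
          · rw [show 2 * 0 + 1 - H (node (t :: ts)) (0 + 1) + 2 = 2 from by omega,
              show 2 * (0 + 1) + 1 - H (node (t :: ts)) (0 + 2) = 3 from by omega]
            intro x hx y hy hxy
            simp only [Set.mem_Icc] at hx hy
            obtain rfl : x = 2 := by omega
            obtain rfl : y = 3 := by omega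
            simp only []
            rw [hrTtop, show (2:ℕ) = 2 * size t + 0 from by omega, hmid2]
            omega
          · rw [show 2 * (0 + 1) + 1 - H (node (t :: ts)) (0 + 2) = 3 from by omega,
              hrTtop, hisB]
    · -- Regions III and IV : the ts-part,  size t ≤ k
      have hn2' : 2 ≤ size (node ts) := by omega
      rcases lt_or_ge k (size t + (size (node ts) - 2)) with hkint | hktop
      · -- Region III : interior, transfer from node ts
        obtain ⟨r, rfl⟩ : ∃ r, k = size t + r := ⟨k - size t, by omega⟩
        have hr3 : r + 3 ≤ size (node ts) := by omega
        have hA1 : H (node (t :: ts)) (size t + r + 1) = H (node ts) (r + 1) := by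
          rw [show size t + r + 1 = size t + (r + 1) from by omega]
          exact H_decomp2 t ts (by omega)
        have hA2 : H (node (t :: ts)) (size t + r + 2) = H (node ts) (r + 2) := by
          rw [show size t + r + 2 = size t + (r + 2) from by omega]
          exact H_decomp2 t ts (by omega)
        have hle1 := H_le (node ts) (r + 1)
        have hle2 := H_le (node ts) (r + 2)
        refine BlockStmt_transfer (node (t :: ts)) (node ts) (size t + r) r (2 * size t)
          (by rw [hA1]; omega)
          (by rw [show size t + r + 1 + 1 = size t + r + 2 from rfl, hA2]; omega)
          (fun i h1 h2 => by rw [Nat.add_comm]; exact Hrot_decomp2 t ts (by omega))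
          (His_decomp2 t ts (by omega)) ?_
          (blocks N (node ts) hNts hn2' r (by omega))
        rw [show size t + r + 1 = size t + (r + 1) from by omega]
        exact His_decomp2 t ts (by omega)
      · -- Region IV : top block
        obtain rfl : k = size t + (size (node ts) - 2) := by omega
        obtain ⟨_, _, B3⟩ := blocks N (node ts) hNts hn2' (size (node ts) - 2) (by omega)
        rw [show size (node ts) - 2 + 1 = size (node ts) - 1 from by omega,
          show size (node ts) - 2 + 2 = size (node ts) from by omega] at B3
        have hHtn : H (node ts) (size (node ts)) = 0 := H_default _ le_rfl
        have hHt1 := H_pos (node ts) (k := size (node ts) - 1) (by omega) (by omega)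
        have hHt2 := H_le (node ts) (size (node ts) - 1)
        obtain ⟨c1, c2, c3, c4, c5⟩ := B3 (by rw [hHtn]; omega)
        rw [hHtn] at c4 c5
        have hA1 : H (node (t :: ts)) (size t + (size (node ts) - 2) + 1)
            = H (node ts) (size (node ts) - 1) := by
          rw [show size t + (size (node ts) - 2) + 1 = size t + (size (node ts) - 1) from by
            omega]
          exact H_decomp2 t ts (by omega)
        have hA2 : H (node (t :: ts)) (size t + (size (node ts) - 2) + 2) = 0 :=
          H_default _ (by omega)
        have his0 : H (internalTree (rot (node (t :: ts)))) (size t + (size (node ts) - 2))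
            = H (internalTree (rot (node ts))) (size (node ts) - 2) + 1 :=
          His_decomp2 t ts (by omega)
        have hisB : H (internalTree (rot (node (t :: ts))))
            (size t + (size (node ts) - 2) + 1) = 0 := His_default _ h2 (by omega)
        have hrTtop : H (rot (node (t :: ts))) (2 * size t + (2 * size (node ts) - 2) + 1)
            = 0 := by
          apply H_default; have := size_rot (node (t :: ts)); omega
        have hidx1 : 2 * (size t + (size (node ts) - 2)) + 1
            - H (node (t :: ts)) (size t + (size (node ts) - 2) + 1)
            = 2 * size t + (2 * (size (node ts) - 2) + 1
              - H (node ts) (size (node ts) - 1)) := by rw [hA1]; omega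
        have hidx2 : 2 * (size t + (size (node ts) - 2) + 1) + 1
            - H (node (t :: ts)) (size t + (size (node ts) - 2) + 2)
            = 2 * size t + (2 * size (node ts) - 2) + 1 := by rw [hA2]; omega
        refine BlockStmt_of_iii (by rw [hA1, hA2]; omega) ?_ ?_ ?_ ?_ ?_
        · rw [hidx1, Hrot_decomp2 t ts (by omega), c1, his0]
        · rw [hidx1, show 2 * size t + (2 * (size (node ts) - 2) + 1
              - H (node ts) (size (node ts) - 1)) + 1
            = 2 * size t + ((2 * (size (node ts) - 2) + 1
              - H (node ts) (size (node ts) - 1)) + 1) from by omega,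
            Hrot_decomp2 t ts (by omega), c2, his0]
        · rw [hidx1, show 2 * size t + (2 * (size (node ts) - 2) + 1
              - H (node ts) (size (node ts) - 1)) + 2
            = 2 * size t + ((2 * (size (node ts) - 2) + 1
              - H (node ts) (size (node ts) - 1)) + 2) from by omega,
            Hrot_decomp2 t ts (by omega), c3, his0]
        · rw [hidx1, hidx2, show 2 * size t + (2 * (size (node ts) - 2) + 1
              - H (node ts) (size (node ts) - 1)) + 2
            = ((2 * (size (node ts) - 2) + 1
              - H (node ts) (size (node ts) - 1)) + 2) + 2 * size t from by omega]
          apply sAO_snoc _ (by omega)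
          · rw [show 2 * size t + (2 * size (node ts) - 2)
              = (2 * size (node ts) - 2) + 2 * size t from by omega]
            refine sAO_shift _ _ (2 * size t) 1
              (fun i h1 h2 => by rw [Nat.add_comm]; exact Hrot_decomp2 t ts (by omega)) ?_
            exact c4.mono (Set.Icc_subset_Icc_right (by omega))
          · intro i hi1 hi2
            rw [hrTtop, show i = 2 * size t + (i - 2 * size t) from by omega,
              Hrot_decomp2 t ts (by omega)]
            omega
        · rw [hidx2, hrTtop, hisB]

end PTree
namespace PTree

theorem j_strictMono (T : PTree) : StrictMono (fun k => 2 * k + 1 - H T (k + 1)) := by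
  apply strictMono_nat_of_lt_succ
  intro k
  have h1 := H_step T (k + 1)
  have h2 := H_le T (k + 1)
  show 2 * k + 1 - H T (k + 1) < 2 * (k + 1) + 1 - H T (k + 1 + 1)
  omega

end PTree

-- STATEMENT 16
theorem stmt16 (T : PTree) (hT : 2 ≤ size T) :
    (∀ k l : ℕ, k < l → l ≤ size T - 1 →
      2 * k + 1 - H T (k + 1) < 2 * l + 1 - H T (l + 1)) ∧
    (2 * 0 + 1 - H T (0 + 1) = 0) ∧
    (2 * (size T - 1) + 1 - H T (size T - 1 + 1) = 2 * size T - 1) ∧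
    (∀ k ≤ size T - 2,
      (internalVertices (rot T)).getD k [] =
        (vertices (rot T)).getD (2 * k + 1 - H T (k + 1)) []) ∧
    (∀ k ≤ size T - 2,
      (2 * (k + 1) + 1 - H T (k + 2) = (2 * k + 1 - H T (k + 1)) + 1 →
        H (rot T) (2 * k + 1 - H T (k + 1)) = H (internalTree (rot T)) k ∧
        H (rot T) (2 * k + 1 - H T (k + 1) + 1) = H (internalTree (rot T)) (k + 1)) ∧
      (2 * (k + 1) + 1 - H T (k + 2) = (2 * k + 1 - H T (k + 1)) + 2 →
        H (rot T) (2 * k + 1 - H T (k + 1)) = H (internalTree (rot T)) k ∧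
        H (rot T) (2 * k + 1 - H T (k + 1) + 1) = H (internalTree (rot T)) (k + 1) ∧
        H (rot T) (2 * k + 1 - H T (k + 1) + 2) = H (internalTree (rot T)) (k + 1)) ∧
      ((2 * k + 1 - H T (k + 1)) + 2 < 2 * (k + 1) + 1 - H T (k + 2) →
        H (rot T) (2 * k + 1 - H T (k + 1)) = H (internalTree (rot T)) k ∧
        H (rot T) (2 * k + 1 - H T (k + 1) + 1) = H (internalTree (rot T)) k + 1 ∧
        H (rot T) (2 * k + 1 - H T (k + 1) + 2) = H (internalTree (rot T)) k + 1 ∧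
        StrictAntiOn (fun m => H (rot T) m)
          (Set.Icc (2 * k + 1 - H T (k + 1) + 2) (2 * (k + 1) + 1 - H T (k + 2))) ∧
        H (rot T) (2 * (k + 1) + 1 - H T (k + 2)) = H (internalTree (rot T)) (k + 1))) := by
  refine ⟨fun k l hkl _ => j_strictMono T hkl, ?_, ?_, conj4 (size T) T le_rfl hT,
    fun k hk => blocks (size T) T le_rfl hT k hk⟩
  · rw [H_one T hT]
  · rw [show size T - 1 + 1 = size T from by omega, H_default T le_rfl]
    omega
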